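/- arXiv:1404.4886 — 2 statements merged into one kernel-verified Lean document; each statement's English description precedes it below -/
import Mathlib

section
/- The order parameter c_1(d) of the von Mises–Fisher distribution satisfies 0 < c_1(d) < 1 for every d > 0. -/
open scoped RealInnerProductSpace
open MeasureTheory

noncomputable def sphμ (n : ℕ) :
    Measure (Metric.sphere (0 : EuclideanSpace ℝ (Fin n)) 1) :=
  (volume : Measure (EuclideanSpace ℝ (Fin n))).toSphere

noncomputable def VMF (n : ℕ) (d : ℝ) (Ω ω : EuclideanSpace ℝ (Fin n)) : ℝ :=
  (∫ w : Metric.sphere (0 : EuclideanSpace ℝ (Fin n)) 1,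
      Real.exp (⟪(w : EuclideanSpace ℝ (Fin n)), Ω⟫ / d) ∂ sphμ n)⁻¹ *
    Real.exp (⟪ω, Ω⟫ / d)

noncomputable def cOne (n : ℕ) (d : ℝ) (Ω : EuclideanSpace ℝ (Fin n)) : ℝ :=
  ∫ ω : Metric.sphere (0 : EuclideanSpace ℝ (Fin n)) 1,
    VMF n d Ω ω * ⟪(ω : EuclideanSpace ℝ (Fin n)), Ω⟫ ∂ sphμ n

open Set Metric Module
open scoped Pointwise

section Aux

variable {n : ℕ}

instance : IsFiniteMeasure (sphμ n) :=
  inferInstanceAs (IsFiniteMeasure (volume : Measure (EuclideanSpace ℝ (Fin n))).toSphere)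

lemma sphμ_null_of_subset_submodule
    {S : Set (Metric.sphere (0 : EuclideanSpace ℝ (Fin n)) 1)} (hS : MeasurableSet S)
    (K : Submodule ℝ (EuclideanSpace ℝ (Fin n))) (hK : K ≠ ⊤)
    (h : ∀ ω ∈ S, ((ω : EuclideanSpace ℝ (Fin n)) ∈ K)) : sphμ n S = 0 := by
  rw [sphμ, Measure.toSphere_apply' _ hS]
  have hsub : (Set.Ioo (0:ℝ) 1 • (Subtype.val '' S)) ⊆ (K : Set (EuclideanSpace ℝ (Fin n))) := by
    rintro x hx
    obtain ⟨r, hr, y, hy, rfl⟩ := Set.mem_smul.1 hx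
    obtain ⟨ω, hω, rfl⟩ := hy
    exact K.smul_mem r (h ω hω)
  rw [measure_mono_null hsub (volume.addHaar_submodule K hK), mul_zero]

lemma sphμ_univ_pos (hn : 1 ≤ n) : 0 < sphμ n Set.univ := by
  rw [sphμ, Measure.toSphere_apply_univ]
  refine ENNReal.mul_pos ?_ (measure_ball_pos _ _ one_pos).ne'
  simp only [ne_eq, Nat.cast_eq_zero]
  rw [finrank_euclideanSpace_fin]
  omega

/-- The restriction of a linear isometry equivalence to the unit sphere,
as a measurable equivalence. -/
noncomputable def sphereMapE
    (e : EuclideanSpace ℝ (Fin n) ≃ₗᵢ[ℝ] EuclideanSpace ℝ (Fin n)) :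
    Metric.sphere (0 : EuclideanSpace ℝ (Fin n)) 1 ≃ᵐ
      Metric.sphere (0 : EuclideanSpace ℝ (Fin n)) 1 where
  toEquiv :=
  { toFun := fun ω => ⟨e (ω : EuclideanSpace ℝ (Fin n)), by
      rw [mem_sphere_zero_iff_norm, e.norm_map,
        ← mem_sphere_zero_iff_norm]; exact ω.2⟩
    invFun := fun ω => ⟨e.symm (ω : EuclideanSpace ℝ (Fin n)), by
      rw [mem_sphere_zero_iff_norm, e.symm.norm_map,
        ← mem_sphere_zero_iff_norm]; exact ω.2⟩
    left_inv := fun ω => Subtype.ext (e.symm_apply_apply _)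
    right_inv := fun ω => Subtype.ext (e.apply_symm_apply _) }
  measurable_toFun := by
    exact Measurable.subtype_mk (e.continuous.measurable.comp measurable_subtype_coe)
  measurable_invFun := by
    exact Measurable.subtype_mk (e.symm.continuous.measurable.comp measurable_subtype_coe)

lemma sphereMapE_measurePreserving
    (e : EuclideanSpace ℝ (Fin n) ≃ₗᵢ[ℝ] EuclideanSpace ℝ (Fin n)) :
    MeasurePreserving (sphereMapE e) (sphμ n) (sphμ n) := by
  refine ⟨(sphereMapE e).measurable, ?_⟩
  ext s hs
  rw [MeasurableEquiv.map_apply, sphμ,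
    Measure.toSphere_apply' _ ((sphereMapE e).measurable hs),
    Measure.toSphere_apply' _ hs]
  have h1 : Subtype.val '' ((sphereMapE e) ⁻¹' s)
      = ⇑e ⁻¹' (Subtype.val '' s) := by
    ext x
    constructor
    · rintro ⟨ω, hω, rfl⟩
      exact ⟨sphereMapE e ω, hω, rfl⟩
    · intro hx
      obtain ⟨σ, hσ, hσx⟩ := hx
      have hx1 : ‖x‖ = 1 := by
        have h2 : ‖e x‖ = 1 := by rw [← hσx]; exact mem_sphere_zero_iff_norm.1 σ.2
        rwa [e.norm_map] at h2
      refine ⟨⟨x, mem_sphere_zero_iff_norm.2 hx1⟩, ?_, rfl⟩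
      have : sphereMapE e ⟨x, mem_sphere_zero_iff_norm.2 hx1⟩ = σ :=
        Subtype.ext (by simpa [sphereMapE] using hσx.symm)
      rw [Set.mem_preimage, this]; exact hσ
  have h2 : Set.Ioo (0:ℝ) 1 • (⇑e ⁻¹' (Subtype.val '' s))
      = ⇑e ⁻¹' (Set.Ioo (0:ℝ) 1 • (Subtype.val '' s)) := by
    ext x
    constructor
    · rintro hx
      obtain ⟨r, hr, y, hy, rfl⟩ := Set.mem_smul.1 hx
      exact Set.mem_preimage.2 (Set.mem_smul.2 ⟨r, hr, e y, hy, (_root_.map_smul e r y).symm⟩)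
    · intro hx
      obtain ⟨r, hr, a, ha, hra⟩ := Set.mem_smul.1 (Set.mem_preimage.1 hx)
      refine Set.mem_smul.2 ⟨r, hr, e.symm a, ?_, ?_⟩
      · show e.symm a ∈ ⇑e ⁻¹' (Subtype.val '' s)
        rw [Set.mem_preimage, e.apply_symm_apply]; exact ha
      · apply e.injective
        rw [_root_.map_smul, e.apply_symm_apply, hra]
  rw [h1, h2,
    e.measurePreserving.measure_preimage_emb e.toMeasurableEquiv.measurableEmbedding]

end Aux

/-- the order parameter of the von Mises–Fisher distribution
satisfies `0 < c₁(d) < 1` for all `d > 0`. -/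
theorem cOne_mem_Ioo (n : ℕ) (hn : 2 ≤ n) (d : ℝ) (hd : 0 < d)
    (Ω : EuclideanSpace ℝ (Fin n)) (hΩ : ‖Ω‖ = 1) :
    0 < cOne n d Ω ∧ cOne n d Ω < 1 := by
  classical
  haveI : CompactSpace (Metric.sphere (0 : EuclideanSpace ℝ (Fin n)) 1) :=
    isCompact_iff_compactSpace.mp (isCompact_sphere (0 : EuclideanSpace ℝ (Fin n)) 1)
  set f : Metric.sphere (0 : EuclideanSpace ℝ (Fin n)) 1 → ℝ := fun ω => ⟪(ω : EuclideanSpace ℝ (Fin n)), Ω⟫ with hf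
  have hfc : Continuous f := Continuous.inner continuous_subtype_val continuous_const
  have hnorm : ∀ ω : Metric.sphere (0 : EuclideanSpace ℝ (Fin n)) 1, ‖(ω : EuclideanSpace ℝ (Fin n))‖ = 1 := fun ω =>
    mem_sphere_zero_iff_norm.1 ω.2
  have hfle : ∀ ω, f ω ≤ 1 := by
    intro ω
    calc f ω ≤ ‖(ω : EuclideanSpace ℝ (Fin n))‖ * ‖Ω‖ := real_inner_le_norm _ _
    _ = 1 := by rw [hnorm, hΩ, one_mul]
  -- integrability of continuous functions on the compact sphere
  have hInt : ∀ g : Metric.sphere (0 : EuclideanSpace ℝ (Fin n)) 1 → ℝ, Continuous g → Integrable g (sphμ n) := by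
    intro g hg
    exact hg.integrable_of_hasCompactSupport
      (IsCompact.of_isClosed_subset isCompact_univ (isClosed_tsupport _) (Set.subset_univ _))
  have int1 : Integrable (fun ω => Real.exp (f ω / d)) (sphμ n) :=
    hInt _ (Real.continuous_exp.comp (hfc.div_const d))
  have int2 : Integrable (fun ω => Real.exp (f ω / d) * f ω) (sphμ n) :=
    hInt _ ((Real.continuous_exp.comp (hfc.div_const d)).mul hfc)
  have int3 : Integrable (fun ω => Real.exp (-f ω / d) * f ω) (sphμ n) :=
    hInt _ ((Real.continuous_exp.comp ((hfc.neg).div_const d)).mul hfc)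
  set Z := ∫ ω, Real.exp (f ω / d) ∂sphμ n with hZ
  set I := ∫ ω, Real.exp (f ω / d) * f ω ∂sphμ n with hI
  have hμpos : 0 < sphμ n Set.univ := sphμ_univ_pos (by omega)
  -- Z > 0
  have hZpos : 0 < Z := by
    rw [hZ]
    refine (integral_pos_iff_support_of_nonneg_ae
      (Filter.Eventually.of_forall fun ω => (Real.exp_pos _).le) int1).2 ?_
    have : (Function.support fun ω => Real.exp (f ω / d)) = Set.univ := by
      ext ω; simp [Function.mem_support, (Real.exp_pos _).ne']
    rwa [this]
  -- rewrite cOne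
  have hc : cOne n d Ω = Z⁻¹ * I := by
    rw [cOne, hI, ← integral_const_mul]
    congr 1
    ext ω
    rw [VMF]
    ring
  -- the set where f ω = 1 is null (it is contained in a single point)
  have hf1null : sphμ n {ω | f ω = 1} = 0 := by
    have hΩmem : (Ω : EuclideanSpace ℝ (Fin n)) ∈ Metric.sphere (0 : EuclideanSpace ℝ (Fin n)) 1 := mem_sphere_zero_iff_norm.2 hΩ
    have hsub : {ω | f ω = 1} ⊆ {(⟨Ω, hΩmem⟩ : Metric.sphere (0 : EuclideanSpace ℝ (Fin n)) 1)} := by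
      intro ω hω
      have : (ω : EuclideanSpace ℝ (Fin n)) = Ω := (inner_eq_one_iff_of_norm_eq_one (hnorm ω) hΩ).1 hω
      simp only [Set.mem_singleton_iff]
      exact Subtype.ext this
    refine measure_mono_null hsub ?_
    refine sphμ_null_of_subset_submodule (measurableSet_singleton _) (ℝ ∙ (Ω : EuclideanSpace ℝ (Fin n))) ?_ ?_
    · intro h
      have h1 : finrank ℝ (ℝ ∙ (Ω : EuclideanSpace ℝ (Fin n))) = 1 :=
        finrank_span_singleton (by intro h0; rw [h0, norm_zero] at hΩ; norm_num at hΩ)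
      rw [h, finrank_top, finrank_euclideanSpace_fin] at h1
      omega
    · rintro ω hω
      rw [Set.mem_singleton_iff] at hω
      rw [hω]
      exact Submodule.mem_span_singleton_self _
  -- the set where f ω = 0 is null (it is contained in a hyperplane)
  have hf0null : sphμ n {ω | f ω = 0} = 0 := by
    refine sphμ_null_of_subset_submodule ?_ ((ℝ ∙ Ω)ᗮ) ?_ ?_
    · exact hfc.measurable (measurableSet_singleton (0 : ℝ))
    · intro h
      have hΩmem : Ω ∈ (ℝ ∙ Ω)ᗮ := h ▸ Submodule.mem_top
      have := Submodule.mem_orthogonal_singleton_iff_inner_left.1 hΩmem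
      rw [real_inner_self_eq_norm_sq, hΩ] at this
      norm_num at this
    · intro ω hω
      exact Submodule.mem_orthogonal_singleton_iff_inner_left.2 hω
  -- I < Z
  have hIZ : I < Z := by
    have hpos : 0 < ∫ ω, Real.exp (f ω / d) * (1 - f ω) ∂sphμ n := by
      refine (integral_pos_iff_support_of_nonneg_ae
        (Filter.Eventually.of_forall fun ω =>
          mul_nonneg (Real.exp_pos _).le (by linarith [hfle ω])) ?_).2 ?_
      · exact hInt _ ((Real.continuous_exp.comp (hfc.div_const d)).mul
          (continuous_const.sub hfc))
      · by_contra hcon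
        push_neg at hcon
        have hzero : sphμ n (Function.support fun ω => Real.exp (f ω / d) * (1 - f ω)) = 0 :=
          le_antisymm hcon zero_le
        have hcover : (Set.univ : Set (Metric.sphere (0 : EuclideanSpace ℝ (Fin n)) 1)) ⊆
            (Function.support fun ω => Real.exp (f ω / d) * (1 - f ω)) ∪ {ω | f ω = 1} := by
          intro ω _
          by_cases h1 : f ω = 1
          · exact Or.inr h1
          · refine Or.inl ?_
            simp only [Function.mem_support]
            exact mul_ne_zero (Real.exp_ne_zero _) (sub_ne_zero.2 (Ne.symm h1))
        have hnull2 : sphμ n Set.univ = 0 :=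
          measure_mono_null hcover (measure_union_null hzero hf1null)
        exact absurd hnull2 hμpos.ne'
    have heq : ∫ ω, Real.exp (f ω / d) * (1 - f ω) ∂sphμ n = Z - I := by
      have : (fun ω => Real.exp (f ω / d) * (1 - f ω))
          = fun ω => Real.exp (f ω / d) - Real.exp (f ω / d) * f ω := by
        ext ω; ring
      rw [this, integral_sub int1 int2]
    linarith [heq ▸ hpos]
  -- 0 < I via the reflection symmetry
  have hIpos : 0 < I := by
    set R := Submodule.reflection ((ℝ ∙ Ω)ᗮ) with hR
    have hRΩ : R Ω = -Ω := by
      refine Submodule.reflection_mem_subspace_orthogonalComplement_eq_neg ?_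
      rw [Submodule.orthogonal_orthogonal]
      exact Submodule.mem_span_singleton_self _
    have hfg : ∀ ω, f (sphereMapE R ω) = -f ω := by
      intro ω
      have h1 : R (-Ω) = Ω := by rw [map_neg, hRΩ, neg_neg]
      have h2 : f (sphereMapE R ω) = ⟪R (ω : EuclideanSpace ℝ (Fin n)), Ω⟫ := rfl
      rw [h2, ← h1, R.inner_map_map, inner_neg_right, hf]
    have hJ : I = -∫ ω, Real.exp (-f ω / d) * f ω ∂sphμ n := by
      have h1 := (sphereMapE_measurePreserving R).integral_comp
        (sphereMapE R).measurableEmbedding (fun ω => Real.exp (f ω / d) * f ω)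
      rw [hI, ← h1]
      simp only [hfg]
      rw [← integral_neg]
      congr 1
      ext ω
      ring
    have hdiff : 0 < ∫ ω, (Real.exp (f ω / d) - Real.exp (-f ω / d)) * f ω ∂sphμ n := by
      refine (integral_pos_iff_support_of_nonneg_ae
        (Filter.Eventually.of_forall fun ω => ?_) ?_).2 ?_
      · rcases le_or_gt 0 (f ω) with h | h
        · refine mul_nonneg (sub_nonneg.2 (Real.exp_le_exp.2 ?_)) h
          exact (div_le_div_iff_of_pos_right hd).2 (by linarith)
        · have ha : Real.exp (f ω / d) - Real.exp (-f ω / d) ≤ 0 :=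
            sub_nonpos.2 (Real.exp_le_exp.2 ((div_le_div_iff_of_pos_right hd).2 (by linarith)))
          have h2 := mul_nonneg (neg_nonneg.2 ha) (neg_nonneg.2 h.le)
          rwa [neg_mul_neg] at h2
      · exact hInt _ (((Real.continuous_exp.comp (hfc.div_const d)).sub
          (Real.continuous_exp.comp ((hfc.neg).div_const d))).mul hfc)
      · by_contra hcon
        push_neg at hcon
        have hzero : sphμ n (Function.support fun ω =>
            (Real.exp (f ω / d) - Real.exp (-f ω / d)) * f ω) = 0 :=
          le_antisymm hcon zero_le
        have hcover : (Set.univ : Set (Metric.sphere (0 : EuclideanSpace ℝ (Fin n)) 1)) ⊆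
            (Function.support fun ω => (Real.exp (f ω / d) - Real.exp (-f ω / d)) * f ω)
              ∪ {ω | f ω = 0} := by
          intro ω _
          by_cases h0 : f ω = 0
          · exact Or.inr h0
          · refine Or.inl ?_
            simp only [Function.mem_support]
            refine mul_ne_zero (sub_ne_zero.2 ?_) h0
            intro hcontr
            have h3 : f ω / d = -f ω / d := Real.exp_eq_exp.1 hcontr
            field_simp at h3
            exact h0 (by linarith)
        have := measure_mono_null hcover (measure_union_null hzero hf0null)
        exact absurd this hμpos.ne'
    have hsum : ∫ ω, (Real.exp (f ω / d) - Real.exp (-f ω / d)) * f ω ∂sphμ n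
        = I - ∫ ω, Real.exp (-f ω / d) * f ω ∂sphμ n := by
      have : (fun ω => (Real.exp (f ω / d) - Real.exp (-f ω / d)) * f ω)
          = fun ω => Real.exp (f ω / d) * f ω - Real.exp (-f ω / d) * f ω := by
        ext ω; ring
      rw [this, integral_sub int2 int3, hI]
    rw [hsum] at hdiff
    linarith
  constructor
  · rw [hc]; exact mul_pos (inv_pos.2 hZpos) hIpos
  · rw [hc, inv_mul_eq_div]
    exact (div_lt_one hZpos).2 hIZ
end

section
/- The function d ↦ c_1(d) is strictly decreasing on (0, ∞). -/
open Real intervalIntegral MeasureTheory Set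

namespace COnePolarAux

noncomputable def Fi (n : ℕ) (κ : ℝ) : ℝ :=
  ∫ θ in (0:ℝ)..π, Real.exp (κ * Real.cos θ) * Real.sin θ ^ (n - 2)

noncomputable def Gi (n : ℕ) (κ : ℝ) : ℝ :=
  ∫ θ in (0:ℝ)..π, Real.cos θ * Real.exp (κ * Real.cos θ) * Real.sin θ ^ (n - 2)

noncomputable def Hi (n : ℕ) (κ : ℝ) : ℝ :=
  ∫ θ in (0:ℝ)..π, Real.cos θ ^ 2 * Real.exp (κ * Real.cos θ) * Real.sin θ ^ (n - 2)

/-- generic positivity of an integral of a nonneg function positive on a subinterval -/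
lemma integral_pos_aux {f : ℝ → ℝ} (hf : Continuous f)
    (h0 : ∀ θ ∈ Icc (0:ℝ) π, 0 ≤ f θ) {a b : ℝ} (ha : 0 ≤ a) (hab : a < b) (hb : b ≤ π)
    (hpos : ∀ θ ∈ Ioo a b, 0 < f θ) : 0 < ∫ θ in (0:ℝ)..π, f θ := by
  have hint : ∀ u v : ℝ, IntervalIntegrable f volume u v := fun u v =>
    hf.intervalIntegrable u v
  rw [← integral_add_adjacent_intervals (hint 0 a) (hint a π),
      ← integral_add_adjacent_intervals (hint a b) (hint b π)]
  have h1 : 0 ≤ ∫ θ in (0:ℝ)..a, f θ := by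
    apply intervalIntegral.integral_nonneg ha
    intro u hu; exact h0 u ⟨hu.1, hu.2.trans (hab.le.trans hb)⟩
  have h2 : 0 < ∫ θ in a..b, f θ :=
    intervalIntegral_pos_of_pos_on (hint a b) hpos hab
  have h3 : 0 ≤ ∫ θ in b..π, f θ := by
    apply intervalIntegral.integral_nonneg hb
    intro u hu; exact h0 u ⟨(ha.trans (hab.le.trans hu.1)), hu.2⟩
  linarith

lemma sin_pow_nonneg (n : ℕ) {θ : ℝ} (hθ : θ ∈ Icc (0:ℝ) π) :
    0 ≤ Real.sin θ ^ (n - 2) :=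
  pow_nonneg (Real.sin_nonneg_of_nonneg_of_le_pi hθ.1 hθ.2) _

lemma Fi_pos (n : ℕ) (κ : ℝ) : 0 < Fi n κ := by
  apply integral_pos_aux (by fun_prop) _ le_rfl Real.pi_pos le_rfl
  · intro θ hθ
    exact mul_pos (Real.exp_pos _) (pow_pos (Real.sin_pos_of_pos_of_lt_pi hθ.1 hθ.2) _)
  · intro θ hθ
    exact mul_nonneg (Real.exp_pos _).le (sin_pow_nonneg n hθ)

lemma hasDerivAt_aux (n : ℕ) (g : ℝ → ℝ) (hg : Continuous g)
    (hgb : ∀ t, |g t| ≤ 1) (κ₀ : ℝ) :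
    HasDerivAt (fun κ => ∫ θ in (0:ℝ)..π, g θ * Real.exp (κ * Real.cos θ) * Real.sin θ ^ (n - 2))
      (∫ θ in (0:ℝ)..π,
        g θ * Real.cos θ * Real.exp (κ₀ * Real.cos θ) * Real.sin θ ^ (n - 2)) κ₀ := by
  have hcont : ∀ κ : ℝ, Continuous fun θ =>
      g θ * Real.exp (κ * Real.cos θ) * Real.sin θ ^ (n - 2) := by fun_prop
  have hcont' : Continuous fun θ =>
      g θ * Real.cos θ * Real.exp (κ₀ * Real.cos θ) * Real.sin θ ^ (n - 2) := by fun_prop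
  have := intervalIntegral.hasDerivAt_integral_of_dominated_loc_of_deriv_le
    (F := fun κ θ => g θ * Real.exp (κ * Real.cos θ) * Real.sin θ ^ (n - 2))
    (F' := fun κ θ => g θ * Real.cos θ * Real.exp (κ * Real.cos θ) * Real.sin θ ^ (n - 2))
    (bound := fun _ => Real.exp (|κ₀| + 1)) (μ := volume) (a := 0) (b := π)
    (Metric.ball_mem_nhds κ₀ one_pos)
    (Filter.Eventually.of_forall fun κ => ((hcont κ).aestronglyMeasurable))
    ((hcont κ₀).intervalIntegrable _ _)
    (hcont'.aestronglyMeasurable)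
    ?_ (intervalIntegrable_const) ?_
  · exact this.2
  · filter_upwards with t ht x hx
    have h1 : |Real.sin t ^ (n - 2)| ≤ 1 := by
      rw [abs_pow]
      exact pow_le_one₀ (abs_nonneg _) (Real.abs_sin_le_one t)
    have h2 : Real.exp (x * Real.cos t) ≤ Real.exp (|κ₀| + 1) := by
      apply Real.exp_le_exp.2
      calc x * Real.cos t ≤ |x * Real.cos t| := le_abs_self _
        _ = |x| * |Real.cos t| := abs_mul _ _
        _ ≤ |x| * 1 := by
            exact mul_le_mul_of_nonneg_left (Real.abs_cos_le_one t) (abs_nonneg _)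
        _ = |x| := mul_one _
        _ ≤ |κ₀| + 1 := by
            have := mem_ball_iff_norm.1 hx
            calc |x| = |κ₀ + (x - κ₀)| := by ring_nf
              _ ≤ |κ₀| + |x - κ₀| := abs_add_le _ _
              _ ≤ |κ₀| + 1 := by
                  have : |x - κ₀| < 1 := by simpa [Real.norm_eq_abs] using this
                  linarith
    have b1 : |g t| * |Real.cos t| ≤ 1 := by
      calc |g t| * |Real.cos t| ≤ 1 * 1 :=
        mul_le_mul (hgb t) (Real.abs_cos_le_one t) (abs_nonneg _) zero_le_one
      _ = 1 := mul_one 1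
    have b1' : 0 ≤ |g t| * |Real.cos t| := by positivity
    have b2 : |g t| * |Real.cos t| * Real.exp (x * Real.cos t) ≤ Real.exp (|κ₀| + 1) := by
      calc |g t| * |Real.cos t| * Real.exp (x * Real.cos t) ≤ 1 * Real.exp (|κ₀| + 1) :=
        mul_le_mul b1 h2 (Real.exp_pos _).le zero_le_one
      _ = Real.exp (|κ₀| + 1) := one_mul _
    calc ‖g t * Real.cos t * Real.exp (x * Real.cos t) * Real.sin t ^ (n - 2)‖
        = |g t| * |Real.cos t| * Real.exp (x * Real.cos t) * |Real.sin t ^ (n - 2)| := by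
          rw [Real.norm_eq_abs, abs_mul, abs_mul, abs_mul, abs_of_pos (Real.exp_pos _)]
      _ ≤ Real.exp (|κ₀| + 1) * 1 := by
          apply mul_le_mul b2 h1 (abs_nonneg _) (Real.exp_pos _).le
      _ = Real.exp (|κ₀| + 1) := mul_one _
  · filter_upwards with t ht x hx
    have h1 : HasDerivAt (fun x : ℝ => x * Real.cos t) (Real.cos t) x :=
      hasDerivAt_mul_const _
    have h2 := h1.exp
    have h3 := (h2.const_mul (g t)).mul_const (Real.sin t ^ (n - 2))
    exact h3.congr_deriv (by ring)

lemma hasDerivAt_Fi (n : ℕ) (κ₀ : ℝ) : HasDerivAt (Fi n) (Gi n κ₀) κ₀ := by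
  have := hasDerivAt_aux n (fun _ => 1) continuous_const (fun t => by norm_num) κ₀
  simp only [one_mul] at this
  exact this

lemma hasDerivAt_Gi (n : ℕ) (κ₀ : ℝ) : HasDerivAt (Gi n) (Hi n κ₀) κ₀ := by
  have h := hasDerivAt_aux n Real.cos Real.continuous_cos (fun t => Real.abs_cos_le_one t) κ₀
  have hval : Hi n κ₀ = ∫ θ in (0:ℝ)..π,
      Real.cos θ * Real.cos θ * Real.exp (κ₀ * Real.cos θ) * Real.sin θ ^ (n - 2) := by
    apply intervalIntegral.integral_congr
    intro θ _
    simp only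
    ring
  rw [hval]
  exact h

lemma var_pos (n : ℕ) (κ : ℝ) : 0 < Hi n κ * Fi n κ - Gi n κ ^ 2 := by
  set m : ℝ := Gi n κ / Fi n κ with hm
  have hF := Fi_pos n κ
  -- the variance integral
  have hint : ∀ g : ℝ → ℝ, Continuous g → IntervalIntegrable
      (fun θ => g θ * Real.exp (κ * Real.cos θ) * Real.sin θ ^ (n - 2)) volume 0 π :=
    fun g hg => (by fun_prop : Continuous fun θ =>
      g θ * Real.exp (κ * Real.cos θ) * Real.sin θ ^ (n - 2)).intervalIntegrable _ _
  have key : (∫ θ in (0:ℝ)..π,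
      (Real.cos θ - m) ^ 2 * Real.exp (κ * Real.cos θ) * Real.sin θ ^ (n - 2))
      = Hi n κ - 2 * m * Gi n κ + m ^ 2 * Fi n κ := by
    have e1 : ∀ θ : ℝ, (Real.cos θ - m) ^ 2 * Real.exp (κ * Real.cos θ) * Real.sin θ ^ (n - 2)
        = Real.cos θ ^ 2 * Real.exp (κ * Real.cos θ) * Real.sin θ ^ (n - 2)
          - (2 * m) * (Real.cos θ * Real.exp (κ * Real.cos θ) * Real.sin θ ^ (n - 2))
          + m ^ 2 * (Real.exp (κ * Real.cos θ) * Real.sin θ ^ (n - 2)) := by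
      intro θ; ring
    rw [intervalIntegral.integral_congr (g := fun θ =>
      Real.cos θ ^ 2 * Real.exp (κ * Real.cos θ) * Real.sin θ ^ (n - 2)
        - (2 * m) * (Real.cos θ * Real.exp (κ * Real.cos θ) * Real.sin θ ^ (n - 2))
        + m ^ 2 * (Real.exp (κ * Real.cos θ) * Real.sin θ ^ (n - 2))) (fun θ _ => e1 θ)]
    rw [intervalIntegral.integral_add, intervalIntegral.integral_sub,
        intervalIntegral.integral_const_mul, intervalIntegral.integral_const_mul]
    · rfl
    · exact hint _ (by fun_prop)
    · exact ((hint _ (by fun_prop)).const_mul _)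
    · exact (hint _ (by fun_prop)).sub ((hint _ (by fun_prop)).const_mul _)
    · have : Continuous fun θ => Real.exp (κ * Real.cos θ) * Real.sin θ ^ (n - 2) := by fun_prop
      exact (this.intervalIntegrable _ _).const_mul _
  have hVpos : 0 < Hi n κ - 2 * m * Gi n κ + m ^ 2 * Fi n κ := by
    rw [← key]
    have hnn : ∀ θ ∈ Icc (0:ℝ) π, 0 ≤ (Real.cos θ - m) ^ 2 * Real.exp (κ * Real.cos θ)
        * Real.sin θ ^ (n - 2) := by
      intro θ hθ
      have := sin_pow_nonneg n hθ
      positivity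
    rcases le_or_gt 0 m with hm0 | hm0
    · -- use interval (π/2, π) where cos < 0 ≤ m
      refine integral_pos_aux (f := fun θ => (Real.cos θ - m) ^ 2 * Real.exp (κ * Real.cos θ)
          * Real.sin θ ^ (n - 2)) (by fun_prop) hnn (a := π / 2) (b := π)
        (by positivity) (by linarith [Real.pi_pos]) le_rfl ?_
      intro θ hθ
      have hcos : Real.cos θ < 0 := by
        have := Real.strictAntiOn_cos
          (Set.mem_Icc.2 ⟨by positivity, by linarith [Real.pi_pos]⟩)
          (Set.mem_Icc.2 ⟨by linarith [hθ.1, Real.pi_pos], hθ.2.le⟩) hθ.1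
        simpa [Real.cos_pi_div_two] using this
      have hsin : 0 < Real.sin θ :=
        Real.sin_pos_of_pos_of_lt_pi (by linarith [Real.pi_pos, hθ.1]) hθ.2
      have hne : Real.cos θ - m < 0 := by linarith
      have h2 : 0 < (Real.cos θ - m) ^ 2 := by nlinarith
      have h3 : 0 < Real.sin θ ^ (n - 2) := pow_pos hsin _
      positivity
    · -- use interval (0, π/2) where cos > 0 > m
      refine integral_pos_aux (f := fun θ => (Real.cos θ - m) ^ 2 * Real.exp (κ * Real.cos θ)
          * Real.sin θ ^ (n - 2)) (by fun_prop) hnn (a := 0) (b := π / 2)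
        le_rfl (by positivity) (by linarith [Real.pi_pos]) ?_
      intro θ hθ
      have hcos : 0 < Real.cos θ := Real.cos_pos_of_mem_Ioo
        ⟨by linarith [hθ.1, Real.pi_pos], hθ.2⟩
      have hsin : 0 < Real.sin θ := Real.sin_pos_of_pos_of_lt_pi hθ.1
        (by linarith [Real.pi_pos, hθ.2])
      have hne : 0 < Real.cos θ - m := by linarith
      have h2 : 0 < (Real.cos θ - m) ^ 2 := by nlinarith
      have h3 : 0 < Real.sin θ ^ (n - 2) := pow_pos hsin _
      positivity
  have expand : Hi n κ * Fi n κ - Gi n κ ^ 2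
      = Fi n κ * (Hi n κ - 2 * m * Gi n κ + m ^ 2 * Fi n κ) := by
    rw [hm]; field_simp; ring
  rw [expand]
  positivity

lemma strictMono_ratio (n : ℕ) : StrictMono (fun κ => Gi n κ / Fi n κ) := by
  apply strictMono_of_deriv_pos
  intro κ
  have hd : HasDerivAt (fun κ => Gi n κ / Fi n κ)
      ((Hi n κ * Fi n κ - Gi n κ * Gi n κ) / Fi n κ ^ 2) κ :=
    (hasDerivAt_Gi n κ).div (hasDerivAt_Fi n κ) (Fi_pos n κ).ne'
  rw [hd.deriv]
  have := var_pos n κ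
  have hF := Fi_pos n κ
  apply div_pos (by nlinarith [sq_nonneg (Gi n κ)]) (by positivity)

end COnePolarAux


open COnePolarAux Real in
private lemma cOnePolar_eq_aux (n : ℕ) (d : ℝ) :
    (∫ θ in (0:ℝ)..π, Real.cos θ * Real.exp (Real.cos θ / d) * Real.sin θ ^ (n - 2)) /
      (∫ θ in (0:ℝ)..π, Real.exp (Real.cos θ / d) * Real.sin θ ^ (n - 2))
    = Gi n d⁻¹ / Fi n d⁻¹ := by
  have h : ∀ θ : ℝ, Real.cos θ / d = d⁻¹ * Real.cos θ := fun θ => by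
    rw [div_eq_inv_mul]
  unfold Gi Fi
  congr 1 <;> exact intervalIntegral.integral_congr fun θ _ => by rw [h θ]

/-- The order parameter of the von Mises–Fisher distribution on `S^{n-1}`,
expressed through the polar-angle integrals:
`c₁(d) = ∫₀^π cos θ e^{cos θ/d} sin^{n-2}θ dθ / ∫₀^π e^{cos θ/d} sin^{n-2}θ dθ`. -/
noncomputable def cOnePolar (n : ℕ) (d : ℝ) : ℝ :=
  (∫ θ in (0:ℝ)..Real.pi,
      Real.cos θ * Real.exp (Real.cos θ / d) * Real.sin θ ^ (n - 2)) /
    (∫ θ in (0:ℝ)..Real.pi, Real.exp (Real.cos θ / d) * Real.sin θ ^ (n - 2))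

/-- `d ↦ c₁(d)` is strictly decreasing on `(0, ∞)`. -/
theorem cOnePolar_strictAntiOn (n : ℕ) (hn : 2 ≤ n) :
    StrictAntiOn (cOnePolar n) (Set.Ioi 0) := by
  intro d₁ h₁ d₂ h₂ h12
  have h₁' : (0:ℝ) < d₁ := h₁
  show cOnePolar n d₂ < cOnePolar n d₁
  unfold cOnePolar
  rw [cOnePolar_eq_aux, cOnePolar_eq_aux]
  exact COnePolarAux.strictMono_ratio n (inv_strictAnti₀ h₁' h12)
end
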